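/- Let D be a distribution on finite X, Ψ : X → [−1,1] a query, η ≥ 0, and T ∈ [−1,1]. Assume the corruption cost ρ is closed under mixtures and ℓ-local, and that Ψ(D̂) ≤ T for every distribution D̂ with ρ(D, D̂) ≤ η. Then for any τ > 0 and n ∈ ℕ, the probability over S ~ D^n that there exists Ŝ with ρ(U(S), U(Ŝ)) ≤ η and Ψ(U(Ŝ)) ≥ T + τ/2 is at most exp(−τ²n/(8ℓ²)). -/

import Mathlib

open Finset
open scoped Classical

def IsPMF {X : Type*} [Fintype X] (D : X → ℝ) : Prop :=
  (∀ x, 0 ≤ D x) ∧ ∑ x, D x = 1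

noncomputable def tvDist {X : Type*} [Fintype X] (D D' : X → ℝ) : ℝ :=
  (∑ x, |D x - D' x|) / 2

/-- The empirical (uniform) distribution of the multiset given by a tuple `S ∈ Xⁿ`. -/
noncomputable def emp {X : Type*} [Fintype X] [DecidableEq X] {n : ℕ} (S : Fin n → X) :
    X → ℝ :=
  fun x => ((univ.filter fun i => S i = x).card : ℝ) / n


section Aux
open Real


lemma key_ineq (p h : ℝ) (hp0 : 0 ≤ p) (hp1 : p ≤ 1) :
    (1 - p) * Real.exp (-(p*h)) + p * Real.exp ((1-p)*h) ≤ Real.exp (h^2/8) := by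
  set u : ℝ → ℝ := fun y => (1 - p) + p * Real.exp y with hu_def
  have hupos : ∀ y, 0 < u y := by
    intro y
    rcases eq_or_lt_of_le hp1 with h1 | h1
    · simp only [hu_def, h1]; simpa using Real.exp_pos y
    · have : 0 < 1 - p := by linarith
      have : 0 ≤ p * Real.exp y := mul_nonneg hp0 (Real.exp_pos y).le
      simp only [hu_def]; linarith
  have hu : ∀ y, HasDerivAt u (p * Real.exp y) y := by
    intro y
    exact ((Real.hasDerivAt_exp y).const_mul p).const_add (1 - p)
  set ψ : ℝ → ℝ := fun y => y^2/8 + p*y - Real.log (u y) with hψ_def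
  set d1 : ℝ → ℝ := fun y => y/4 + p - p * Real.exp y / u y with hd1_def
  have hψ' : ∀ y, HasDerivAt ψ (d1 y) y := by
    intro y
    have h1 : HasDerivAt (fun y : ℝ => y^2/8 + p*y) (y/4 + p) y := by
      have := ((hasDerivAt_pow 2 y).div_const 8).add ((hasDerivAt_id y).const_mul p)
      exact this.congr_deriv (by push_cast; ring)
    have h2 : HasDerivAt (fun y => Real.log (u y)) (p * Real.exp y / u y) y :=
      (hu y).log (hupos y).ne'
    exact h1.sub h2
  have hd1' : ∀ y, HasDerivAt d1 (1/4 - (p * Real.exp y * u y - p * Real.exp y * (p * Real.exp y)) / (u y)^2) y := by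
    intro y
    have h1 : HasDerivAt (fun y : ℝ => y/4 + p) (1/4) y := by
      simpa using ((hasDerivAt_id y).div_const 4).add_const p
    have h2 : HasDerivAt (fun y => p * Real.exp y / u y)
        ((p * Real.exp y * u y - p * Real.exp y * (p * Real.exp y)) / (u y)^2) y :=
      ((Real.hasDerivAt_exp y).const_mul p).div (hu y) (hupos y).ne'
    exact h1.sub h2
  have hd2nonneg : ∀ y, 0 ≤ 1/4 - (p * Real.exp y * u y - p * Real.exp y * (p * Real.exp y)) / (u y)^2 := by
    intro y
    set q : ℝ := p * Real.exp y / u y with hq_def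
    have hq0 : 0 ≤ q := div_nonneg (mul_nonneg hp0 (Real.exp_pos y).le) (hupos y).le
    have hq1 : q ≤ 1 := by
      rw [hq_def, div_le_one (hupos y)]
      simp only [hu_def]; nlinarith [Real.exp_pos y]
    have heq : (p * Real.exp y * u y - p * Real.exp y * (p * Real.exp y)) / (u y)^2 = q * (1 - q) := by
      rw [hq_def]
      field_simp [hq_def, (hupos y).ne']
    rw [heq]; nlinarith [sq_nonneg (q - 1/2)]
  have hd1mono : Monotone d1 := by
    apply monotone_of_deriv_nonneg
    · exact fun y => (hd1' y).differentiableAt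
    · intro y; rw [(hd1' y).deriv]; exact hd2nonneg y
  have hd10 : d1 0 = 0 := by simp [hd1_def, hu_def]
  have hψ0 : ψ 0 = 0 := by simp [hψ_def, hu_def]
  have hψnonneg : ∀ y, 0 ≤ ψ y := by
    intro y
    rcases le_or_gt 0 y with hy | hy
    · have hmono : MonotoneOn ψ (Set.Ici 0) := by
        apply monotoneOn_of_deriv_nonneg (convex_Ici 0)
        · exact (continuous_iff_continuousAt.mpr fun y => (hψ' y).differentiableAt.continuousAt).continuousOn
        · intro z hz; exact (hψ' z).differentiableAt.differentiableWithinAt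
        · intro z hz
          rw [(hψ' z).deriv]
          have hz0 : (0:ℝ) < z := by simpa [interior_Ici] using hz
          have := hd1mono hz0.le
          rw [hd10] at this; exact this
      have := hmono (Set.self_mem_Ici) (Set.mem_Ici.mpr hy) hy
      rw [hψ0] at this; exact this
    · have hanti : AntitoneOn ψ (Set.Iic 0) := by
        apply antitoneOn_of_deriv_nonpos (convex_Iic 0)
        · exact (continuous_iff_continuousAt.mpr fun y => (hψ' y).differentiableAt.continuousAt).continuousOn
        · intro z hz; exact (hψ' z).differentiableAt.differentiableWithinAt
        · intro z hz
          rw [(hψ' z).deriv]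
          have hz0 : z ≤ 0 := le_of_lt (by simpa [interior_Iic] using hz : z < 0)
          have := hd1mono hz0
          rw [hd10] at this; exact this
      have := hanti (Set.mem_Iic.mpr hy.le) (Set.self_mem_Iic) hy.le
      rw [hψ0] at this; exact this
  -- conclude
  have hlog : Real.log (u h) ≤ p*h + h^2/8 := by have := hψnonneg h; simp only [hψ_def] at this; linarith
  have huexp : u h ≤ Real.exp (p*h + h^2/8) := by
    calc u h = Real.exp (Real.log (u h)) := (Real.exp_log (hupos h)).symm
    _ ≤ _ := Real.exp_le_exp.mpr hlog
  have hfinal : (1 - p) * Real.exp (-(p*h)) + p * Real.exp ((1-p)*h) = Real.exp (-(p*h)) * u h := by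
    simp only [hu_def]
    rw [show (1-p)*h = -(p*h)+h by ring, Real.exp_add]
    ring
  rw [hfinal]
  calc Real.exp (-(p*h)) * u h ≤ Real.exp (-(p*h)) * Real.exp (p*h + h^2/8) :=
        mul_le_mul_of_nonneg_left huexp (Real.exp_pos _).le
  _ = Real.exp (h^2/8) := by rw [← Real.exp_add]; ring_nf


lemma hoeff {ι : Type*} [Fintype ι] (w Z : ι → ℝ) (hw : ∀ i, 0 ≤ w i)
    (hw1 : ∑ i, w i = 1) (a b t : ℝ) (hZ : ∀ i, Z i ∈ Set.Icc a b) :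
    ∑ i, w i * Real.exp (t * Z i)
      ≤ Real.exp (t * (∑ i, w i * Z i) + t^2*(b-a)^2/8) := by
  have hne : Nonempty ι := by
    by_contra hc
    rw [not_nonempty_iff] at hc
    rw [Finset.sum_eq_zero (fun i _ => (hc.false i).elim)] at hw1
    norm_num at hw1
  obtain ⟨i₀⟩ := hne
  have hab : a ≤ b := (hZ i₀).1.trans (hZ i₀).2
  set μ := ∑ i, w i * Z i with hμ
  have hμa : a ≤ μ := by
    calc a = ∑ i, w i * a := by rw [← Finset.sum_mul, hw1, one_mul]
    _ ≤ μ := Finset.sum_le_sum fun i _ => mul_le_mul_of_nonneg_left (hZ i).1 (hw i)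
  have hμb : μ ≤ b := by
    calc μ ≤ ∑ i, w i * b := Finset.sum_le_sum fun i _ => mul_le_mul_of_nonneg_left (hZ i).2 (hw i)
    _ = b := by rw [← Finset.sum_mul, hw1, one_mul]
  rcases eq_or_lt_of_le hab with heq | hlt
  · -- a = b: all Z i = a
    have hZa : ∀ i, Z i = a := fun i => le_antisymm (heq ▸ (hZ i).2) (hZ i).1
    have hμeq : μ = a := by
      rw [hμ]
      calc ∑ i, w i * Z i = ∑ i, w i * a := by
            exact Finset.sum_congr rfl fun i _ => by rw [hZa i]
      _ = a := by rw [← Finset.sum_mul, hw1, one_mul]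
    calc ∑ i, w i * Real.exp (t * Z i) = ∑ i, w i * Real.exp (t * a) := by
          exact Finset.sum_congr rfl fun i _ => by rw [hZa i]
    _ = Real.exp (t * a) := by rw [← Finset.sum_mul, hw1, one_mul]
    _ ≤ _ := by
        rw [hμeq]
        apply Real.exp_le_exp.mpr
        nlinarith [sq_nonneg (t*(b-a))]
  · -- a < b
    set p := (μ - a)/(b - a) with hp
    have hba : (0:ℝ) < b - a := by linarith
    have hp0 : 0 ≤ p := div_nonneg (by linarith) hba.le
    have hp1 : p ≤ 1 := by rw [hp, div_le_one hba]; linarith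
    -- convexity pointwise
    have hconv : ∀ i, Real.exp (t * Z i)
        ≤ (b - Z i)/(b - a) * Real.exp (t*a) + (Z i - a)/(b - a) * Real.exp (t*b) := by
      intro i
      have h1 : t * Z i = ((b - Z i)/(b-a)) * (t*a) + ((Z i - a)/(b-a)) * (t*b) := by
        field_simp; ring
      rw [h1]
      have hθ1 : (0:ℝ) ≤ (b - Z i)/(b-a) := div_nonneg (by linarith [(hZ i).2]) hba.le
      have hθ2 : (0:ℝ) ≤ (Z i - a)/(b-a) := div_nonneg (by linarith [(hZ i).1]) hba.le
      have hθs : (b - Z i)/(b-a) + (Z i - a)/(b-a) = 1 := by field_simp; ring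
      have := convexOn_exp.2 (Set.mem_univ (t*a)) (Set.mem_univ (t*b)) hθ1 hθ2 hθs
      simpa [smul_eq_mul] using this
    have hsum : ∑ i, w i * Real.exp (t * Z i)
        ≤ (b - μ)/(b - a) * Real.exp (t*a) + (μ - a)/(b - a) * Real.exp (t*b) := by
      calc ∑ i, w i * Real.exp (t * Z i)
          ≤ ∑ i, w i * ((b - Z i)/(b - a) * Real.exp (t*a) + (Z i - a)/(b - a) * Real.exp (t*b)) :=
            Finset.sum_le_sum fun i _ => mul_le_mul_of_nonneg_left (hconv i) (hw i)
      _ = (b - μ)/(b - a) * Real.exp (t*a) + (μ - a)/(b - a) * Real.exp (t*b) := by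
          have hterm : ∀ i ∈ univ, w i * ((b - Z i)/(b - a) * Real.exp (t*a) + (Z i - a)/(b - a) * Real.exp (t*b))
              = w i * ((Real.exp (t*a)*b - Real.exp (t*b)*a)/(b-a))
                + (w i * Z i) * ((Real.exp (t*b) - Real.exp (t*a))/(b-a)) := by
            intro i _; field_simp; ring
          rw [Finset.sum_congr rfl hterm, Finset.sum_add_distrib, ← Finset.sum_mul, ← Finset.sum_mul,
            hw1, ← hμ]
          field_simp
          ring
    -- now bound the two-point mgf by key_ineq with h := t*(b-a)
    set hh := t * (b - a) with hhh
    have hkey := key_ineq p hh hp0 hp1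
    have e1 : t * a = t * μ + (-(p * hh)) := by rw [hhh, hp]; field_simp; ring
    have e2 : t * b = t * μ + ((1-p) * hh) := by rw [hhh, hp]; field_simp; ring
    have e3 : (b - μ)/(b - a) = 1 - p := by rw [hp]; field_simp; ring
    calc ∑ i, w i * Real.exp (t * Z i)
        ≤ (b - μ)/(b - a) * Real.exp (t*a) + (μ - a)/(b - a) * Real.exp (t*b) := hsum
    _ = Real.exp (t*μ) * ((1-p) * Real.exp (-(p*hh)) + p * Real.exp ((1-p)*hh)) := by
        rw [e1, e2, e3, ← hp, Real.exp_add, Real.exp_add]; ring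
    _ ≤ Real.exp (t*μ) * Real.exp (hh^2/8) :=
        mul_le_mul_of_nonneg_left hkey (Real.exp_pos _).le
    _ = Real.exp (t * μ + t^2*(b-a)^2/8) := by rw [← Real.exp_add, hhh]; ring_nf


lemma sum_cons_decomp (X : Type*) [Fintype X] (n : ℕ) (F : (Fin (n+1) → X) → ℝ) :
    ∑ S : Fin (n+1) → X, F S = ∑ x : X, ∑ s : Fin n → X, F (Fin.cons x s) := by
  rw [← Fintype.sum_prod_type (f := fun p : X × (Fin n → X) => F (Fin.cons p.1 p.2))]
  exact (Fintype.sum_equiv (Fin.consEquiv fun _ => X) _ _ (fun p => rfl)).symm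

lemma prod_cons_weight {X : Type*} [Fintype X] (D : X → ℝ) (n : ℕ) (x : X) (s : Fin n → X) :
    (∏ i : Fin (n+1), D ((Fin.cons x s : Fin (n+1) → X) i)) = D x * ∏ i : Fin n, D (s i) := by
  rw [Fin.prod_univ_succ]
  simp

lemma mgf_bound {X : Type*} [Fintype X] (D : X → ℝ) (hD : IsPMF D) (c t : ℝ)
    (hc : 0 ≤ c) :
    ∀ (n : ℕ) (f : (Fin n → X) → ℝ),
    (∀ (i : Fin n) (S S' : Fin n → X), (∀ j, j ≠ i → S j = S' j) → f S - f S' ≤ c) →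
    ∑ S : Fin n → X, (∏ i, D (S i)) * Real.exp (t * f S)
      ≤ Real.exp (t * (∑ S : Fin n → X, (∏ i, D (S i)) * f S) + n * (t^2*c^2/8)) := by
  intro n
  induction n with
  | zero =>
    intro f _
    simp [Fintype.sum_unique]
  | succ n ih =>
    intro f hbd
    have hXne : Nonempty X := by
      by_contra hc'
      rw [not_nonempty_iff] at hc'
      have := hD.2
      rw [Finset.sum_eq_zero (fun x _ => (hc'.false x).elim)] at this
      norm_num at this
    set g : (Fin n → X) → ℝ := fun s => ∑ x, D x * f (Fin.cons x s) with hg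
    -- inner Hoeffding for each s
    have hinner : ∀ s : Fin n → X,
        ∑ x, D x * Real.exp (t * f (Fin.cons x s)) ≤ Real.exp (t * g s + t^2*c^2/8) := by
      intro s
      obtain ⟨x₀, _, hx₀⟩ := Finset.exists_min_image univ (fun x => f (Fin.cons x s))
        ⟨Classical.arbitrary X, mem_univ _⟩
      have hZ : ∀ x, f (Fin.cons x s) ∈ Set.Icc (f (Fin.cons x₀ s)) (f (Fin.cons x₀ s) + c) := by
        intro x
        constructor
        · exact hx₀ x (mem_univ x)
        · have := hbd 0 (Fin.cons x s) (Fin.cons x₀ s) (by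
            intro j hj
            rcases Fin.eq_zero_or_eq_succ j with h0 | ⟨k, hk⟩
            · exact absurd h0 hj
            · subst hk; simp)
          linarith
      have := hoeff D (fun x => f (Fin.cons x s)) hD.1 hD.2
        (f (Fin.cons x₀ s)) (f (Fin.cons x₀ s) + c) t hZ
      simpa [hg] using this
    -- bounded differences for g
    have hgbd : ∀ (i : Fin n) (s s' : Fin n → X), (∀ j, j ≠ i → s j = s' j) → g s - g s' ≤ c := by
      intro i s s' hagree
      have : ∀ x, D x * f (Fin.cons x s) - D x * f (Fin.cons x s') ≤ D x * c := by
        intro x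
        rw [← mul_sub]
        refine mul_le_mul_of_nonneg_left ?_ (hD.1 x)
        apply hbd i.succ
        intro j hj
        rcases Fin.eq_zero_or_eq_succ j with h0 | ⟨k, hk⟩
        · subst h0; simp
        · subst hk
          simp only [Fin.cons_succ]
          exact hagree k (fun hk' => hj (by rw [hk']))
      calc g s - g s' = ∑ x, (D x * f (Fin.cons x s) - D x * f (Fin.cons x s')) := by
            rw [hg]; rw [Finset.sum_sub_distrib]
      _ ≤ ∑ x, D x * c := Finset.sum_le_sum fun x _ => this x
      _ = c := by rw [← Finset.sum_mul, hD.2, one_mul]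
    -- expectations agree
    have hEg : ∑ s : Fin n → X, (∏ i, D (s i)) * g s
        = ∑ S : Fin (n+1) → X, (∏ i, D (S i)) * f S := by
      rw [sum_cons_decomp X n (fun S => (∏ i, D (S i)) * f S)]
      rw [Finset.sum_comm]
      refine Finset.sum_congr rfl fun s _ => ?_
      rw [hg, Finset.mul_sum]
      refine Finset.sum_congr rfl fun x _ => ?_
      rw [prod_cons_weight]
      ring
    rw [show ((n+1 : ℕ) : ℝ) = (n:ℝ)+1 by push_cast; ring]
    calc ∑ S : Fin (n+1) → X, (∏ i, D (S i)) * Real.exp (t * f S)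
        = ∑ s : Fin n → X, ∑ x, (D x * ∏ i, D (s i)) * Real.exp (t * f (Fin.cons x s)) := by
          rw [sum_cons_decomp X n (fun S => (∏ i, D (S i)) * Real.exp (t * f S)), Finset.sum_comm]
          exact Finset.sum_congr rfl fun s _ => Finset.sum_congr rfl fun x _ => by
            rw [prod_cons_weight]
    _ = ∑ s : Fin n → X, (∏ i, D (s i)) * ∑ x, D x * Real.exp (t * f (Fin.cons x s)) := by
          refine Finset.sum_congr rfl fun s _ => ?_
          rw [Finset.mul_sum]
          exact Finset.sum_congr rfl fun x _ => by ring
    _ ≤ ∑ s : Fin n → X, (∏ i, D (s i)) * Real.exp (t * g s + t^2*c^2/8) := by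
          refine Finset.sum_le_sum fun s _ => ?_
          exact mul_le_mul_of_nonneg_left (hinner s)
            (Finset.prod_nonneg fun i _ => hD.1 (s i))
    _ = Real.exp (t^2*c^2/8) * ∑ s : Fin n → X, (∏ i, D (s i)) * Real.exp (t * g s) := by
          rw [Finset.mul_sum]
          exact Finset.sum_congr rfl fun s _ => by rw [Real.exp_add]; ring
    _ ≤ Real.exp (t^2*c^2/8) * Real.exp (t * (∑ s : Fin n → X, (∏ i, D (s i)) * g s) + n * (t^2*c^2/8)) :=
          mul_le_mul_of_nonneg_left (ih g hgbd) (Real.exp_pos _).le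
    _ = Real.exp (t * (∑ S : Fin (n+1) → X, (∏ i, D (S i)) * f S) + (n+1) * (t^2*c^2/8)) := by
          rw [hEg, ← Real.exp_add]
          congr 1
          ring


lemma mix_closure {X : Type*} [Fintype X] (ρ : (X → ℝ) → (X → ℝ) → ENNReal) (η : ENNReal)
    (hmix : ∀ θ : ℝ, θ ∈ Set.Ioo (0:ℝ) 1 → ∀ D₁ D₂ Dh₁ Dh₂ : X → ℝ,
      IsPMF D₁ → IsPMF D₂ → IsPMF Dh₁ → IsPMF Dh₂ →
      ρ (fun x => θ * D₁ x + (1 - θ) * D₂ x) (fun x => θ * Dh₁ x + (1 - θ) * Dh₂ x)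
        ≤ max (ρ D₁ Dh₁) (ρ D₂ Dh₂))
    {ι : Type*} :
    ∀ (s : Finset ι) (w : ι → ℝ) (A B : ι → X → ℝ),
    (∀ i, 0 ≤ w i) → ∑ i ∈ s, w i = 1 →
    (∀ i, IsPMF (A i)) → (∀ i, IsPMF (B i)) →
    (∀ i ∈ s, w i ≠ 0 → ρ (A i) (B i) ≤ η) →
    ρ (fun x => ∑ i ∈ s, w i * A i x) (fun x => ∑ i ∈ s, w i * B i x) ≤ η := by
  classical
  intro s
  induction s using Finset.induction_on with
  | empty => intro w A B hw hw1 _ _ _; simp at hw1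
  | @insert a s ha ih =>
    intro w A B hw hw1 hA hB hρ
    rw [Finset.sum_insert ha] at hw1
    by_cases h0 : w a = 0
    · have e1 : (fun x => ∑ i ∈ insert a s, w i * A i x) = (fun x => ∑ i ∈ s, w i * A i x) := by
        funext x; rw [Finset.sum_insert ha, h0, zero_mul, zero_add]
      have e2 : (fun x => ∑ i ∈ insert a s, w i * B i x) = (fun x => ∑ i ∈ s, w i * B i x) := by
        funext x; rw [Finset.sum_insert ha, h0, zero_mul, zero_add]
      rw [e1, e2]
      exact ih w A B hw (by rw [h0] at hw1; linarith) hA hB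
        (fun i hi hwi => hρ i (Finset.mem_insert_of_mem hi) hwi)
    · have hrest : 0 ≤ ∑ i ∈ s, w i := Finset.sum_nonneg fun i _ => hw i
      have hwa1 : w a ≤ 1 := by linarith
      rcases eq_or_lt_of_le hwa1 with h1 | h1
      · -- w a = 1, all others zero
        have hsz : ∑ i ∈ s, w i = 0 := by rw [h1] at hw1; linarith
        have hz : ∀ i ∈ s, w i = 0 := by
          intro i hi
          exact (Finset.sum_eq_zero_iff_of_nonneg (fun j _ => hw j)).mp hsz i hi
        have e1 : (fun x => ∑ i ∈ insert a s, w i * A i x) = A a := by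
          funext x
          rw [Finset.sum_insert ha, h1, one_mul,
            Finset.sum_eq_zero (fun i hi => by rw [hz i hi, zero_mul]), add_zero]
        have e2 : (fun x => ∑ i ∈ insert a s, w i * B i x) = B a := by
          funext x
          rw [Finset.sum_insert ha, h1, one_mul,
            Finset.sum_eq_zero (fun i hi => by rw [hz i hi, zero_mul]), add_zero]
        rw [e1, e2]
        exact hρ a (Finset.mem_insert_self a s) h0
      · -- 0 < w a < 1
        have hwa0 : 0 < w a := lt_of_le_of_ne (hw a) (Ne.symm h0)
        set θ := w a with hθ
        have h1θ : 0 < 1 - θ := by linarith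
        set w' : ι → ℝ := fun i => w i / (1 - θ) with hw'
        have hw'nn : ∀ i, 0 ≤ w' i := fun i => div_nonneg (hw i) h1θ.le
        have hw'1 : ∑ i ∈ s, w' i = 1 := by
          rw [hw']
          rw [← Finset.sum_div]
          rw [div_eq_one_iff_eq h1θ.ne']
          linarith
        set A' : X → ℝ := fun x => ∑ i ∈ s, w' i * A i x with hA'
        set B' : X → ℝ := fun x => ∑ i ∈ s, w' i * B i x with hB'
        have hA'pmf : IsPMF A' := by
          constructor
          · intro x; exact Finset.sum_nonneg fun i _ => mul_nonneg (hw'nn i) ((hA i).1 x)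
          · rw [hA', Finset.sum_comm]
            calc ∑ i ∈ s, ∑ x, w' i * A i x = ∑ i ∈ s, w' i := by
                  refine Finset.sum_congr rfl fun i _ => ?_
                  rw [← Finset.mul_sum, (hA i).2, mul_one]
            _ = 1 := hw'1
        have hB'pmf : IsPMF B' := by
          constructor
          · intro x; exact Finset.sum_nonneg fun i _ => mul_nonneg (hw'nn i) ((hB i).1 x)
          · rw [hB', Finset.sum_comm]
            calc ∑ i ∈ s, ∑ x, w' i * B i x = ∑ i ∈ s, w' i := by
                  refine Finset.sum_congr rfl fun i _ => ?_
                  rw [← Finset.mul_sum, (hB i).2, mul_one]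
            _ = 1 := hw'1
        have hrec : ρ A' B' ≤ η :=
          ih w' A B hw'nn hw'1 hA hB (fun i hi hwi => hρ i (Finset.mem_insert_of_mem hi)
            (fun hz => hwi (by rw [hw']; simp [hz])))
        have e1 : (fun x => ∑ i ∈ insert a s, w i * A i x)
            = (fun x => θ * A a x + (1 - θ) * A' x) := by
          funext x
          rw [Finset.sum_insert ha, hA', Finset.mul_sum]
          congr 1
          refine Finset.sum_congr rfl fun i _ => ?_
          rw [hw']
          field_simp
        have e2 : (fun x => ∑ i ∈ insert a s, w i * B i x)
            = (fun x => θ * B a x + (1 - θ) * B' x) := by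
          funext x
          rw [Finset.sum_insert ha, hB', Finset.mul_sum]
          congr 1
          refine Finset.sum_congr rfl fun i _ => ?_
          rw [hw']
          field_simp
        rw [e1, e2]
        calc ρ (fun x => θ * A a x + (1 - θ) * A' x) (fun x => θ * B a x + (1 - θ) * B' x)
            ≤ max (ρ (A a) (B a)) (ρ A' B') :=
              hmix θ ⟨hwa0, h1⟩ (A a) A' (B a) B' (hA a) hA'pmf (hB a) hB'pmf
        _ ≤ η := max_le (hρ a (Finset.mem_insert_self a s) h0) hrec


lemma weight_sum {X : Type*} [Fintype X] (D : X → ℝ) (hD : IsPMF D) :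
    ∀ n : ℕ, ∑ S : Fin n → X, ∏ i, D (S i) = 1 := by
  intro n
  induction n with
  | zero => simp
  | succ n ih =>
    rw [sum_cons_decomp X n (fun S => ∏ i, D (S i))]
    calc ∑ x : X, ∑ s : Fin n → X, ∏ i : Fin (n+1), D ((Fin.cons x s : Fin (n+1) → X) i)
        = ∑ x : X, D x * ∑ s : Fin n → X, ∏ i, D (s i) := by
          refine Finset.sum_congr rfl fun x _ => ?_
          rw [Finset.mul_sum]
          exact Finset.sum_congr rfl fun s _ => prod_cons_weight D n x s
    _ = 1 := by
        rw [Finset.sum_congr rfl (fun x _ => by rw [ih, mul_one] : ∀ x ∈ univ, D x * ∑ s : Fin n → X, ∏ i, D (s i) = D x)]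
        exact hD.2

lemma count_cons {X : Type*} [Fintype X] [DecidableEq X] (n : ℕ) (x y : X) (s : Fin n → X) :
    ((univ.filter fun i : Fin (n+1) => (Fin.cons y s : Fin (n+1) → X) i = x).card : ℝ)
      = (if y = x then 1 else 0) + ((univ.filter fun i : Fin n => s i = x).card : ℝ) := by
  rw [Finset.card_filter, Finset.card_filter]
  push_cast
  rw [Fin.sum_univ_succ]
  simp

lemma expected_count {X : Type*} [Fintype X] [DecidableEq X] (D : X → ℝ) (hD : IsPMF D) :
    ∀ (n : ℕ) (x : X),
      ∑ S : Fin n → X, (∏ i, D (S i)) * ((univ.filter fun i => S i = x).card : ℝ) = n * D x := by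
  intro n
  induction n with
  | zero => intro x; simp
  | succ n ih =>
    intro x
    rw [sum_cons_decomp X n (fun S => (∏ i, D (S i)) * ((univ.filter fun i => S i = x).card : ℝ))]
    have hstep : ∀ y : X, ∑ s : Fin n → X,
        (∏ i : Fin (n+1), D ((Fin.cons y s : Fin (n+1) → X) i))
          * ((univ.filter fun i : Fin (n+1) => (Fin.cons y s : Fin (n+1) → X) i = x).card : ℝ)
        = D y * ((if y = x then 1 else 0) + n * D x) := by
      intro y
      calc ∑ s : Fin n → X, (∏ i : Fin (n+1), D ((Fin.cons y s : Fin (n+1) → X) i))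
            * ((univ.filter fun i : Fin (n+1) => (Fin.cons y s : Fin (n+1) → X) i = x).card : ℝ)
          = ∑ s : Fin n → X, D y * ((∏ i, D (s i)) * ((if y = x then 1 else 0)
              + ((univ.filter fun i : Fin n => s i = x).card : ℝ))) := by
            refine Finset.sum_congr rfl fun s _ => ?_
            rw [prod_cons_weight, count_cons]
            ring
      _ = D y * ((if y = x then 1 else 0) * (∑ s : Fin n → X, ∏ i, D (s i))
            + ∑ s : Fin n → X, (∏ i, D (s i)) * ((univ.filter fun i : Fin n => s i = x).card : ℝ)) := by
            rw [← Finset.mul_sum]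
            congr 1
            rw [Finset.mul_sum, ← Finset.sum_add_distrib]
            exact Finset.sum_congr rfl fun s _ => by ring
      _ = D y * ((if y = x then 1 else 0) + n * D x) := by
            rw [weight_sum D hD, ih x, mul_one]
    rw [Finset.sum_congr rfl fun y _ => hstep y]
    have : ∑ y : X, D y * ((if y = x then 1 else 0) + n * D x)
        = (∑ y : X, D y * (if y = x then 1 else 0)) + (∑ y : X, D y) * (n * D x) := by
      rw [Finset.sum_mul, ← Finset.sum_add_distrib]
      exact Finset.sum_congr rfl fun y _ => by ring
    rw [this, hD.2, one_mul]
    rw [Finset.sum_congr rfl (fun y _ => by rw [mul_ite, mul_one, mul_zero] :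
      ∀ y ∈ univ, D y * (if y = x then 1 else 0) = if y = x then D y else 0)]
    rw [Finset.sum_ite_eq' univ x D]
    simp
    push_cast
    ring

lemma emp_pmf {X : Type*} [Fintype X] [DecidableEq X] {n : ℕ} (hn : 0 < n) (S : Fin n → X) :
    IsPMF (emp S) := by
  constructor
  · intro x
    exact div_nonneg (Nat.cast_nonneg _) (Nat.cast_nonneg n)
  · have hcount : ∑ x : X, (univ.filter fun i => S i = x).card = n := by
      have := Finset.card_eq_sum_card_fiberwise
        (f := S) (s := (univ : Finset (Fin n))) (t := (univ : Finset X)) (fun a _ => mem_univ _)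
      rw [Finset.card_fin] at this
      exact this.symm
    simp only [emp]
    rw [← Finset.sum_div, div_eq_one_iff_eq (by positivity : (n:ℝ) ≠ 0), ← Nat.cast_sum, hcount]

lemma emp_psi {X : Type*} [Fintype X] [DecidableEq X] {n : ℕ} (hn : 0 < n) (S : Fin n → X)
    (Ψ : X → ℝ) : ∑ x, emp S x * Ψ x = (∑ j, Ψ (S j)) / n := by
  have hfib : ∑ x : X, ∑ j ∈ univ.filter fun j => S j = x, Ψ (S j) = ∑ j, Ψ (S j) :=
    Finset.sum_fiberwise_of_maps_to (fun a _ => mem_univ _) _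
  have hinner : ∀ x : X, ∑ j ∈ univ.filter fun j => S j = x, Ψ (S j)
      = ((univ.filter fun j => S j = x).card : ℝ) * Ψ x := by
    intro x
    rw [Finset.sum_congr rfl (fun j hj => by rw [(Finset.mem_filter.mp hj).2] :
      ∀ j ∈ univ.filter fun j => S j = x, Ψ (S j) = Ψ x)]
    rw [Finset.sum_const, nsmul_eq_mul]
  calc ∑ x, emp S x * Ψ x
      = (∑ x : X, ((univ.filter fun j => S j = x).card : ℝ) * Ψ x) / n := by
        rw [Finset.sum_div]
        exact Finset.sum_congr rfl fun x _ => by simp only [emp]; ring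
  _ = (∑ j, Ψ (S j)) / n := by
        rw [← hfib]
        exact congrArg (· / (n:ℝ)) (Finset.sum_congr rfl fun x _ => (hinner x).symm)


lemma tv_single {X : Type*} [Fintype X] [DecidableEq X] {n : ℕ} (hn : 0 < n)
    (i : Fin n) (S S' : Fin n → X) (h : ∀ j, j ≠ i → S j = S' j) :
    tvDist (emp S) (emp S') ≤ 1 / n := by
  have hc : ∀ x : X, ((univ.filter fun j => S j = x).card : ℝ)
      - ((univ.filter fun j => S' j = x).card : ℝ)
      = (if S i = x then (1:ℝ) else 0) - (if S' i = x then (1:ℝ) else 0) := by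
    intro x
    rw [Finset.card_filter, Finset.card_filter]
    push_cast
    rw [← Finset.add_sum_erase _ _ (mem_univ i), ← Finset.add_sum_erase _ (fun j => if S' j = x then (1:ℝ) else 0) (mem_univ i)]
    have he : ∑ j ∈ univ.erase i, (if S j = x then (1:ℝ) else 0)
        = ∑ j ∈ univ.erase i, (if S' j = x then (1:ℝ) else 0) :=
      Finset.sum_congr rfl fun j hj => by rw [h j (Finset.ne_of_mem_erase hj)]
    rw [he]; ring
  have habs : ∀ x : X, |emp S x - emp S' x|
      ≤ ((if S i = x then (1:ℝ) else 0) + (if S' i = x then (1:ℝ) else 0)) / n := by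
    intro x
    have : emp S x - emp S' x
        = ((if S i = x then (1:ℝ) else 0) - (if S' i = x then (1:ℝ) else 0)) / n := by
      simp only [emp]
      rw [div_sub_div_same, hc x]
    rw [this, abs_div, abs_of_nonneg (by positivity : (0:ℝ) ≤ (n:ℝ))]
    gcongr
    split_ifs <;> norm_num
  have hsum : ∑ x : X, |emp S x - emp S' x| ≤ 2 / n := by
    calc ∑ x : X, |emp S x - emp S' x|
        ≤ ∑ x : X, ((if S i = x then (1:ℝ) else 0) + (if S' i = x then (1:ℝ) else 0)) / n :=
          Finset.sum_le_sum fun x _ => habs x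
    _ = ((∑ x : X, if S i = x then (1:ℝ) else 0) + ∑ x : X, if S' i = x then (1:ℝ) else 0) / n := by
          rw [← Finset.sum_div, Finset.sum_add_distrib]
    _ = 2 / n := by
          rw [Finset.sum_ite_eq univ (S i) (fun _ => (1:ℝ)) , Finset.sum_ite_eq univ (S' i) (fun _ => (1:ℝ))]
          norm_num
  rw [tvDist]
  have h2 : (2:ℝ)/n = 2*(1/n) := by ring
  linarith


lemma psi_diff {X : Type*} [Fintype X] (Dh Eh Ψ : X → ℝ) (hΨ : ∀ x, |Ψ x| ≤ 1) :
    ∑ x, Dh x * Ψ x - ∑ x, Eh x * Ψ x ≤ 2 * tvDist Dh Eh := by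
  rw [← Finset.sum_sub_distrib]
  calc ∑ x, (Dh x * Ψ x - Eh x * Ψ x) ≤ ∑ x, |Dh x - Eh x| := by
        refine Finset.sum_le_sum fun x _ => ?_
        have hx : Dh x * Ψ x - Eh x * Ψ x = (Dh x - Eh x) * Ψ x := by ring
        rw [hx]
        calc (Dh x - Eh x) * Ψ x ≤ |(Dh x - Eh x) * Ψ x| := le_abs_self _
        _ = |Dh x - Eh x| * |Ψ x| := abs_mul _ _
        _ ≤ |Dh x - Eh x| * 1 := mul_le_mul_of_nonneg_left (hΨ x) (abs_nonneg _)
        _ = |Dh x - Eh x| := mul_one _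
  _ = 2 * tvDist Dh Eh := by rw [tvDist]; ring

lemma expected_emp {X : Type*} [Fintype X] [DecidableEq X] (D : X → ℝ) (hD : IsPMF D)
    {n : ℕ} (hn : 0 < n) (x : X) :
    ∑ S : Fin n → X, (∏ i, D (S i)) * emp S x = D x := by
  have h1 : ∀ S : Fin n → X, (∏ i, D (S i)) * emp S x
      = ((∏ i, D (S i)) * ((univ.filter fun i => S i = x).card : ℝ)) / n := by
    intro S; simp only [emp]; ring
  rw [Finset.sum_congr rfl fun S _ => h1 S, ← Finset.sum_div, expected_count D hD n x]
  field_simp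

end Aux

/-- Single-query concentration against adaptive adversaries: if `ρ` is closed under
mixtures and `ℓ`-local, and every oblivious `η`-corruption `D̂` of `D` has `Ψ(D̂) ≤ T`,
then the probability over `S ~ Dⁿ` that some adaptive corruption `Ŝ` of `S` (with
`ρ(U(S), U(Ŝ)) ≤ η`) achieves `Ψ(U(Ŝ)) ≥ T + τ/2` is at most `exp(−τ²n/(8ℓ²))`. -/

theorem stmt13 {X : Type*} [Fintype X] [DecidableEq X]
    (ρ : (X → ℝ) → (X → ℝ) → ENNReal) (ℓ : ℝ) (hℓ : 0 < ℓ)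
    (hmix : ∀ θ : ℝ, θ ∈ Set.Ioo (0:ℝ) 1 → ∀ D₁ D₂ Dh₁ Dh₂ : X → ℝ,
      IsPMF D₁ → IsPMF D₂ → IsPMF Dh₁ → IsPMF Dh₂ →
      ρ (fun x => θ * D₁ x + (1 - θ) * D₂ x) (fun x => θ * Dh₁ x + (1 - θ) * Dh₂ x)
        ≤ max (ρ D₁ Dh₁) (ρ D₂ Dh₂))
    (hlocal : ∀ D E Dh : X → ℝ, IsPMF D → IsPMF E → IsPMF Dh →
      ∃ Eh : X → ℝ, IsPMF Eh ∧ ρ E Eh ≤ ρ D Dh ∧ tvDist Dh Eh ≤ ℓ * tvDist D E)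
    (D : X → ℝ) (hD : IsPMF D) (η : ENNReal)
    (Ψ : X → ℝ) (hΨ : ∀ x, Ψ x ∈ Set.Icc (-1:ℝ) 1)
    (T : ℝ) (hT : T ∈ Set.Icc (-1:ℝ) 1)
    (hbound : ∀ Dh : X → ℝ, IsPMF Dh → ρ D Dh ≤ η → ∑ x, Dh x * Ψ x ≤ T)
    (τ : ℝ) (hτ : 0 < τ) (n : ℕ) (hn : 0 < n) :
    ∑ S : Fin n → X,
        (if ∃ m' : ℕ, 0 < m' ∧ ∃ Sh : Fin m' → X,
            ρ (emp S) (emp Sh) ≤ η ∧ T + τ / 2 ≤ (∑ j, Ψ (Sh j)) / m'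
          then ∏ i, D (S i) else 0)
      ≤ Real.exp (-(τ ^ 2 * n) / (8 * ℓ ^ 2)) := by
  classical
  set w : (Fin n → X) → ℝ := fun S => ∏ i, D (S i) with hw_def
  have hwnn : ∀ S, 0 ≤ w S := fun S => Finset.prod_nonneg fun i _ => hD.1 (S i)
  by_cases hex : ∃ S : Fin n → X, ∃ m' : ℕ, 0 < m' ∧ ∃ Sh : Fin m' → X,
      ρ (emp S) (emp Sh) ≤ η ∧ T + τ / 2 ≤ (∑ j, Ψ (Sh j)) / m'
  swap
  · have hz : ∀ S : Fin n → X, (if ∃ m' : ℕ, 0 < m' ∧ ∃ Sh : Fin m' → X,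
        ρ (emp S) (emp Sh) ≤ η ∧ T + τ / 2 ≤ (∑ j, Ψ (Sh j)) / m' then w S else 0) = 0 :=
      fun S => if_neg (fun h => hex ⟨S, h⟩)
    rw [Finset.sum_congr rfl fun S _ => hz S, Finset.sum_const, smul_zero]
    exact (Real.exp_pos _).le
  obtain ⟨S₀, m₀, hm₀, Sh₀, hρ₀, hval₀⟩ := hex
  have hΨabs : ∀ x, |Ψ x| ≤ 1 := fun x => abs_le.mpr ⟨(hΨ x).1, (hΨ x).2⟩
  set F : (Fin n → X) → Set ℝ :=
    fun S => {r | ∃ Dh : X → ℝ, IsPMF Dh ∧ ρ (emp S) Dh ≤ η ∧ r = ∑ x, Dh x * Ψ x} with hF_def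
  have hFne : ∀ S : Fin n → X, (F S).Nonempty := by
    intro S
    obtain ⟨Eh, hEh, hρE, _⟩ := hlocal (emp S₀) (emp S) (emp Sh₀)
      (emp_pmf hn S₀) (emp_pmf hn S) (emp_pmf hm₀ Sh₀)
    exact ⟨_, Eh, hEh, hρE.trans hρ₀, rfl⟩
  have hFbdd : ∀ S : Fin n → X, BddAbove (F S) := by
    intro S
    refine ⟨1, fun r hr => ?_⟩
    obtain ⟨Dh, hDh, _, rfl⟩ := hr
    calc ∑ x, Dh x * Ψ x ≤ ∑ x, Dh x * 1 :=
          Finset.sum_le_sum fun x _ => mul_le_mul_of_nonneg_left (hΨ x).2 (hDh.1 x)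
    _ = 1 := by rw [Finset.sum_congr rfl fun x _ => mul_one (Dh x), hDh.2]
  set f : (Fin n → X) → ℝ := fun S => sSup (F S) with hf_def
  have hc : (0:ℝ) < 2 * ℓ / n := by positivity
  -- bounded differences
  have hbd : ∀ (i : Fin n) (S S' : Fin n → X), (∀ j, j ≠ i → S j = S' j) →
      f S - f S' ≤ 2 * ℓ / n := by
    intro i S S' hagree
    have hstep : ∀ r ∈ F S, r ≤ f S' + 2 * ℓ / n := by
      rintro r ⟨Dh, hDh, hρD, rfl⟩
      obtain ⟨Eh, hEh, hρE, htv⟩ := hlocal (emp S) (emp S') Dh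
        (emp_pmf hn S) (emp_pmf hn S') hDh
      have h1 : ∑ x, Eh x * Ψ x ≤ f S' :=
        le_csSup (hFbdd S') ⟨Eh, hEh, hρE.trans hρD, rfl⟩
      have h2 : ∑ x, Dh x * Ψ x - ∑ x, Eh x * Ψ x ≤ 2 * tvDist Dh Eh :=
        psi_diff Dh Eh Ψ hΨabs
      have h3 : tvDist (emp S) (emp S') ≤ 1 / n := tv_single hn i S S' hagree
      have h4 : tvDist Dh Eh ≤ ℓ * (1 / n) :=
        htv.trans (mul_le_mul_of_nonneg_left h3 hℓ.le)
      have h5 : 2 * (ℓ * (1 / n)) = 2 * ℓ / n := by ring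
      linarith
    have h6 : f S ≤ f S' + 2 * ℓ / n := csSup_le (hFne S) hstep
    linarith
  -- expectation bound
  have hEf : ∑ S : Fin n → X, w S * f S ≤ T := by
    refine le_of_forall_pos_le_add ?_
    intro ε hε
    have hchoice : ∀ S : Fin n → X, ∃ Dh : X → ℝ, IsPMF Dh ∧ ρ (emp S) Dh ≤ η ∧
        f S - ε < ∑ x, Dh x * Ψ x := by
      intro S
      obtain ⟨r, hrF, hr⟩ := exists_lt_of_lt_csSup (hFne S) (by linarith : f S - ε < f S)
      obtain ⟨Dh, h1, h2, rfl⟩ := hrF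
      exact ⟨Dh, h1, h2, hr⟩
    choose Dh hDh1 hDh2 hDh3 using hchoice
    set M : X → ℝ := fun x => ∑ S : Fin n → X, w S * Dh S x with hM_def
    have hMpmf : IsPMF M := by
      constructor
      · intro x
        exact Finset.sum_nonneg fun S _ => mul_nonneg (hwnn S) ((hDh1 S).1 x)
      · rw [hM_def, Finset.sum_comm]
        calc ∑ S : Fin n → X, ∑ x, w S * Dh S x = ∑ S : Fin n → X, w S := by
              refine Finset.sum_congr rfl fun S _ => ?_
              rw [← Finset.mul_sum, (hDh1 S).2, mul_one]
        _ = 1 := weight_sum D hD n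
    have hDmix : D = fun x => ∑ S : Fin n → X, w S * emp S x :=
      funext fun x => (expected_emp D hD hn x).symm
    have hρM : ρ D M ≤ η := by
      rw [hDmix, hM_def]
      exact mix_closure ρ η hmix univ w (fun S => emp S) Dh hwnn (weight_sum D hD n)
        (fun S => emp_pmf hn S) hDh1 (fun S _ _ => hDh2 S)
    have hTM := hbound M hMpmf hρM
    have hswap : ∑ S : Fin n → X, w S * (∑ x, Dh S x * Ψ x) = ∑ x, M x * Ψ x := by
      rw [hM_def]
      rw [Finset.sum_congr rfl (fun x _ => Finset.sum_mul _ _ _ :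
        ∀ x ∈ univ, (∑ S : Fin n → X, w S * Dh S x) * Ψ x
          = ∑ S : Fin n → X, (w S * Dh S x) * Ψ x), Finset.sum_comm]
      refine Finset.sum_congr rfl fun S _ => ?_
      rw [Finset.mul_sum]
      exact Finset.sum_congr rfl fun x _ => by ring
    calc ∑ S : Fin n → X, w S * f S
        ≤ ∑ S : Fin n → X, w S * ((∑ x, Dh S x * Ψ x) + ε) :=
          Finset.sum_le_sum fun S _ =>
            mul_le_mul_of_nonneg_left (by linarith [hDh3 S]) (hwnn S)
    _ = (∑ S : Fin n → X, w S * (∑ x, Dh S x * Ψ x)) + (∑ S : Fin n → X, w S) * ε := by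
        rw [Finset.sum_mul, ← Finset.sum_add_distrib]
        exact Finset.sum_congr rfl fun S _ => by ring
    _ = (∑ x, M x * Ψ x) + ε := by rw [hswap, weight_sum D hD n, one_mul]
    _ ≤ T + ε := by linarith
  -- Chernoff
  set t : ℝ := τ * n / (2 * ℓ ^ 2) with ht_def
  have ht : 0 < t := by positivity
  have hmgf := mgf_bound D hD (2 * ℓ / n) t hc.le n f hbd
  set Ef : ℝ := ∑ S : Fin n → X, w S * f S with hEf_def
  have hptw : ∀ S : Fin n → X,
      (if ∃ m' : ℕ, 0 < m' ∧ ∃ Sh : Fin m' → X,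
          ρ (emp S) (emp Sh) ≤ η ∧ T + τ / 2 ≤ (∑ j, Ψ (Sh j)) / m' then w S else 0)
        ≤ w S * Real.exp (t * f S - t * (Ef + τ / 2)) := by
    intro S
    by_cases hPS : ∃ m' : ℕ, 0 < m' ∧ ∃ Sh : Fin m' → X,
        ρ (emp S) (emp Sh) ≤ η ∧ T + τ / 2 ≤ (∑ j, Ψ (Sh j)) / m'
    · rw [if_pos hPS]
      obtain ⟨m', hm', Sh, hρS, hval⟩ := hPS
      have hmem : (∑ j, Ψ (Sh j)) / m' ∈ F S :=
        ⟨emp Sh, emp_pmf hm' Sh, hρS, (emp_psi hm' Sh Ψ).symm⟩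
      have h1 : T + τ / 2 ≤ f S := le_csSup_of_le (hFbdd S) hmem hval
      have h2 : 0 ≤ t * f S - t * (Ef + τ / 2) := by nlinarith
      calc w S = w S * 1 := (mul_one _).symm
      _ ≤ _ := mul_le_mul_of_nonneg_left (Real.one_le_exp h2) (hwnn S)
    · rw [if_neg hPS]
      exact mul_nonneg (hwnn S) (Real.exp_pos _).le
  calc ∑ S : Fin n → X,
      (if ∃ m' : ℕ, 0 < m' ∧ ∃ Sh : Fin m' → X,
          ρ (emp S) (emp Sh) ≤ η ∧ T + τ / 2 ≤ (∑ j, Ψ (Sh j)) / m' then w S else 0)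
      ≤ ∑ S : Fin n → X, w S * Real.exp (t * f S - t * (Ef + τ / 2)) :=
        Finset.sum_le_sum fun S _ => hptw S
  _ = Real.exp (-(t * (Ef + τ / 2))) * ∑ S : Fin n → X, w S * Real.exp (t * f S) := by
        rw [Finset.mul_sum]
        refine Finset.sum_congr rfl fun S _ => ?_
        rw [show t * f S - t * (Ef + τ / 2) = -(t * (Ef + τ / 2)) + t * f S by ring,
          Real.exp_add]
        ring
  _ ≤ Real.exp (-(t * (Ef + τ / 2)))
        * Real.exp (t * Ef + n * (t ^ 2 * (2 * ℓ / n) ^ 2 / 8)) :=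
        mul_le_mul_of_nonneg_left hmgf (Real.exp_pos _).le
  _ = Real.exp (n * (t ^ 2 * (2 * ℓ / n) ^ 2 / 8) - t * (τ / 2)) := by
        rw [← Real.exp_add]; ring_nf
  _ = Real.exp (-(τ ^ 2 * n) / (8 * ℓ ^ 2)) := by
        congr 1
        rw [ht_def]
        have hn' : ((n:ℝ)) ≠ 0 := by positivity
        field_simp
        ring
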